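/- arXiv:1102.3823 — 2 statements merged into one kernel-verified Lean document; each statement's English description precedes it below -/
import Mathlib

section
/- Let Ω ⊂ ℝⁿ be a pointed, solid, polyhedral cone, let E ⊂ F be faces of Ω with dim E = dim F − 1. Define Ω_E^⊛ = {x ∈ span(E^⊥ ∩ Ω*) : ⟨x, y⟩ ≥ 0 for all y ∈ E^⊥ ∩ Ω*}. Then (F^⊥ ∩ Ω*)^⊥ ∩ Ω_E^⊛ is an extreme ray of the cone Ω_E^⊛, and hence contains a unique unit vector e_F(E). Moreover e_F(E) ∈ E^⊥ ∩ span(F). -/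
open scoped RealInnerProductSpace

noncomputable section

abbrev Euc (n : ℕ) := EuclideanSpace ℝ (Fin n)

def IsConeSet {n : ℕ} (Ω : Set (Euc n)) : Prop :=
  ∀ x ∈ Ω, ∀ t : ℝ, 0 ≤ t → t • x ∈ Ω

def IsPointedSet {n : ℕ} (Ω : Set (Euc n)) : Prop :=
  ¬ ∃ (x v : Euc n), v ≠ 0 ∧ ∀ t : ℝ, x + t • v ∈ Ω

def IsSolidSet {n : ℕ} (Ω : Set (Euc n)) : Prop :=
  Submodule.span ℝ Ω = ⊤

def IsPolyhedralCone {n : ℕ} (Ω : Set (Euc n)) : Prop :=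
  ∃ s : Finset (Euc n),
    Ω = {x | ∃ c : Euc n → ℝ, (∀ v, 0 ≤ c v) ∧ x = ∑ v ∈ s, c v • v}

def DualConeSet {n : ℕ} (Ω : Set (Euc n)) : Set (Euc n) :=
  {y | ∀ x ∈ Ω, 0 ≤ ⟪x, y⟫}

def IsFaceOfCone {n : ℕ} (Ω F : Set (Euc n)) : Prop :=
  F ⊆ Ω ∧ Convex ℝ F ∧ IsConeSet F ∧ ∀ x ∈ Ω, ∀ y ∈ Ω, x + y ∈ F → x ∈ F ∧ y ∈ F

/-- The dual face `E^⊥ ∩ Ω*`. -/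
def DualFace {n : ℕ} (Ω F : Set (Euc n)) : Set (Euc n) :=
  {y ∈ DualConeSet Ω | ∀ x ∈ F, ⟪x, y⟫ = 0}

/-- `Ω_E^⊛ = {x ∈ span (E^⊥ ∩ Ω*) : ⟨x, y⟩ ≥ 0 for all y ∈ E^⊥ ∩ Ω*}`. -/
def CircledDual {n : ℕ} (Ω E : Set (Euc n)) : Set (Euc n) :=
  {x | x ∈ Submodule.span ℝ (DualFace Ω E) ∧ ∀ y ∈ DualFace Ω E, 0 ≤ ⟪x, y⟫}

/-- `R` is an extreme ray of the convex cone `C`. -/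
def IsExtremeRayOf {n : ℕ} (C R : Set (Euc n)) : Prop :=
  R ⊆ C ∧ (∃ v, v ≠ 0 ∧ R = {x | ∃ t : ℝ, 0 ≤ t ∧ x = t • v}) ∧
    ∀ x ∈ C, ∀ y ∈ C, x + y ∈ R → x ∈ R ∧ y ∈ R


namespace ExtremeRayAux

variable {n : ℕ}

/-- The cone generated by a finite set. -/
def coneOf (s : Finset (Euc n)) : Set (Euc n) :=
  {x | ∃ c : Euc n → ℝ, (∀ v, 0 ≤ c v) ∧ x = ∑ v ∈ s, c v • v}

lemma zero_mem_coneOf (s : Finset (Euc n)) : (0 : Euc n) ∈ coneOf s :=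
  ⟨0, fun _ => le_refl 0, by simp⟩

lemma mem_coneOf_of_mem {s : Finset (Euc n)} {v : Euc n} (hv : v ∈ s) : v ∈ coneOf s := by
  classical
  refine ⟨fun w => if w = v then 1 else 0, fun w => by dsimp; split <;> norm_num, ?_⟩
  simp only []
  rw [show (∑ w ∈ s, (if w = v then (1:ℝ) else 0) • w) = ∑ w ∈ s, (if w = v then w else 0) from
    Finset.sum_congr rfl fun w _ => by split <;> simp]
  simp [hv]

lemma add_mem_coneOf {s : Finset (Euc n)} {x y : Euc n}
    (hx : x ∈ coneOf s) (hy : y ∈ coneOf s) : x + y ∈ coneOf s := by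
  obtain ⟨c, hc, rfl⟩ := hx; obtain ⟨d, hd, rfl⟩ := hy
  exact ⟨c + d, fun v => add_nonneg (hc v) (hd v), by
    simp [add_smul, Finset.sum_add_distrib]⟩

lemma smul_mem_coneOf {s : Finset (Euc n)} {x : Euc n} {t : ℝ}
    (ht : 0 ≤ t) (hx : x ∈ coneOf s) : t • x ∈ coneOf s := by
  obtain ⟨c, hc, rfl⟩ := hx
  exact ⟨fun v => t * c v, fun v => mul_nonneg ht (hc v), by
    simp [Finset.smul_sum, smul_smul]⟩

lemma sum_mem_coneOf {s : Finset (Euc n)} {ι : Type*} (t : Finset ι) (f : ι → Euc n)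
    (hf : ∀ i ∈ t, f i ∈ coneOf s) : (∑ i ∈ t, f i) ∈ coneOf s :=
  Finset.sum_induction f (· ∈ coneOf s) (fun _ _ ha hb => add_mem_coneOf ha hb)
    (zero_mem_coneOf s) hf

lemma coneOf_mono {t s : Finset (Euc n)} (h : t ⊆ s) : coneOf t ⊆ coneOf s := by
  classical
  rintro x ⟨c, hc, rfl⟩
  refine ⟨fun v => if v ∈ t then c v else 0,
    fun v => by dsimp; split; exacts [hc v, le_rfl], ?_⟩
  rw [← Finset.sum_subset h (fun v _ hvt => by simp [hvt])]
  exact Finset.sum_congr rfl fun v hv => by simp [hv]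

lemma reduce_step (t : Finset (Euc n))
    (hdep : ¬ LinearIndependent ℝ (fun v : ↥t => (v : Euc n)))
    (c : Euc n → ℝ) (hc : ∀ v, 0 ≤ c v) :
    ∃ t' : Finset (Euc n), t' ⊂ t ∧ ∃ c' : Euc n → ℝ, (∀ v, 0 ≤ c' v) ∧
      ∑ v ∈ t', c' v • v = ∑ v ∈ t, c v • v := by
  classical
  -- a nontrivial relation supported on `t`, with a positive coefficient somewhere
  have hrel : ∃ g : Euc n → ℝ, (∑ v ∈ t, g v • v = 0) ∧ ∃ v ∈ t, 0 < g v := by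
    obtain ⟨g, hg0, i₀, hi₀⟩ := Fintype.not_linearIndependent_iff.mp hdep
    set gV : Euc n → ℝ := fun v => if h : v ∈ t then g ⟨v, h⟩ else 0 with hgV
    have hsum : ∑ v ∈ t, gV v • v = 0 := by
      rw [← Finset.sum_coe_sort t (fun v => gV v • v)]
      rw [show (∑ i : ↥t, gV ↑i • (i : Euc n)) = ∑ i : ↥t, g i • (i : Euc n) from
        Finset.sum_congr rfl fun i _ => by simp [hgV, i.2]]
      exact hg0
    have hne : gV ↑i₀ ≠ 0 := by simpa [hgV, i₀.2] using hi₀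
    rcases lt_or_gt_of_ne hne with hlt | hgt
    · refine ⟨fun v => - gV v, ?_, ⟨↑i₀, i₀.2, by simpa using hlt⟩⟩
      simp only [neg_smul, Finset.sum_neg_distrib, hsum, neg_zero]
    · exact ⟨gV, hsum, ⟨↑i₀, i₀.2, hgt⟩⟩
  obtain ⟨g, hgsum, v₁, hv₁t, hv₁⟩ := hrel
  set Tp : Finset (Euc n) := t.filter (fun v => 0 < g v) with hTp
  have hTpne : Tp.Nonempty := ⟨v₁, by simp [hTp, hv₁t, hv₁]⟩
  obtain ⟨v₀, hv₀Tp, hmin⟩ := Tp.exists_min_image (fun v => c v / g v) hTpne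
  have hv₀t : v₀ ∈ t := (Finset.mem_filter.mp hv₀Tp).1
  have hgv₀ : 0 < g v₀ := (Finset.mem_filter.mp hv₀Tp).2
  set μ : ℝ := c v₀ / g v₀ with hμ
  have hμ0 : 0 ≤ μ := div_nonneg (hc v₀) hgv₀.le
  refine ⟨t.erase v₀, Finset.erase_ssubset hv₀t,
    fun v => if v ∈ t.erase v₀ then c v - μ * g v else 0, ?_, ?_⟩
  · intro v; dsimp; split
    · rename_i hv
      have hvt : v ∈ t := Finset.mem_of_mem_erase hv
      rcases lt_or_ge 0 (g v) with hpos | hnonpos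
      · have hvTp : v ∈ Tp := Finset.mem_filter.mpr ⟨hvt, hpos⟩
        have h4 : μ ≤ c v / g v := by rw [hμ]; exact hmin v hvTp
        have : μ * g v ≤ c v := (le_div_iff₀ hpos).mp h4
        linarith
      · have : μ * g v ≤ 0 := mul_nonpos_of_nonneg_of_nonpos hμ0 hnonpos
        linarith [hc v]
    · exact le_rfl
  · have key : ∀ v ∈ t.erase v₀,
        (if v ∈ t.erase v₀ then c v - μ * g v else 0) • v = (c v - μ * g v) • v :=
      fun v hv => by simp [hv]
    rw [Finset.sum_congr rfl key]
    have h1 : ∑ v ∈ t, (c v - μ * g v) • v = ∑ v ∈ t, c v • v := by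
      have : ∑ v ∈ t, (c v - μ * g v) • v
          = ∑ v ∈ t, c v • v - μ • ∑ v ∈ t, g v • v := by
        rw [Finset.smul_sum, ← Finset.sum_sub_distrib]
        exact Finset.sum_congr rfl fun v _ => by
          rw [sub_smul, smul_smul]
      rw [this, hgsum, smul_zero, sub_zero]
    have h2 : (∑ v ∈ t.erase v₀, (c v - μ * g v) • v) + (c v₀ - μ * g v₀) • v₀
        = ∑ v ∈ t, (c v - μ * g v) • v := Finset.sum_erase_add t _ hv₀t
    have h3 : c v₀ - μ * g v₀ = 0 := by
      rw [hμ]; field_simp; ring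
    rw [h3, zero_smul, add_zero] at h2
    rw [h2, h1]

lemma exists_indep_rep_aux : ∀ (m : ℕ) (s : Finset (Euc n)) (c : Euc n → ℝ),
    s.card ≤ m → (∀ v, 0 ≤ c v) →
    ∃ t, t ⊆ s ∧ LinearIndependent ℝ (fun v : ↥t => (v : Euc n)) ∧
      ∃ c' : Euc n → ℝ, (∀ v, 0 ≤ c' v) ∧ ∑ v ∈ t, c' v • v = ∑ v ∈ s, c v • v := by
  intro m
  induction m with
  | zero =>
    intro s c hcard hc
    have hs : s = ∅ := Finset.card_eq_zero.mp (Nat.le_zero.mp hcard)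
    subst hs
    exact ⟨∅, Finset.Subset.refl _, linearIndependent_empty_type, c, hc, rfl⟩
  | succ m ih =>
    intro s c hcard hc
    by_cases hind : LinearIndependent ℝ (fun v : ↥s => (v : Euc n))
    · exact ⟨s, Finset.Subset.refl _, hind, c, hc, rfl⟩
    · obtain ⟨t', ht', c', hc', heq⟩ := reduce_step s hind c hc
      obtain ⟨t, hts, hind2, c'', hc'', heq2⟩ := ih t' c'
        (by have := Finset.card_lt_card ht'; omega) hc'
      exact ⟨t, hts.trans ht'.subset, hind2, c'', hc'', heq2.trans heq⟩

lemma isClosed_coneOf_indep {t : Finset (Euc n)}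
    (ht : LinearIndependent ℝ (fun v : ↥t => (v : Euc n))) : IsClosed (coneOf t) := by
  classical
  let L : (↥t → ℝ) →ₗ[ℝ] Euc n :=
    { toFun := fun c => ∑ i : ↥t, c i • (i : Euc n)
      map_add' := by intro a b; simp [add_smul, Finset.sum_add_distrib]
      map_smul' := by intro m a; simp [Finset.smul_sum, smul_smul] }
  have hker : LinearMap.ker L = ⊥ := by
    rw [LinearMap.ker_eq_bot']
    intro c hcL
    have hc0 : ∑ i : ↥t, c i • (i : Euc n) = 0 := hcL
    funext i
    exact Fintype.linearIndependent_iff.mp ht c hc0 i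
  have hemb : Topology.IsClosedEmbedding L := LinearMap.isClosedEmbedding_of_injective hker
  have hset : IsClosed {c : ↥t → ℝ | ∀ i, 0 ≤ c i} := by
    have : {c : ↥t → ℝ | ∀ i, 0 ≤ c i} = ⋂ i, {c | 0 ≤ c i} := by
      ext c; simp [Set.mem_iInter]
    rw [this]
    exact isClosed_iInter fun i => isClosed_le continuous_const (continuous_apply i)
  have himg : coneOf t = L '' {c | ∀ i, 0 ≤ c i} := by
    ext x
    constructor
    · rintro ⟨c, hcn, rfl⟩
      refine ⟨fun i => c ↑i, fun i => hcn ↑i, ?_⟩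
      show (∑ i : ↥t, c ↑i • (i : Euc n)) = _
      rw [Finset.sum_coe_sort t (fun v => c v • v)]
    · rintro ⟨c, hcn, rfl⟩
      refine ⟨fun v => if h : v ∈ t then c ⟨v, h⟩ else 0, ?_, ?_⟩
      · intro v; dsimp; split; exacts [hcn _, le_rfl]
      · show (∑ i : ↥t, c i • (i : Euc n))
          = ∑ v ∈ t, (if h : v ∈ t then c ⟨v, h⟩ else 0) • v
        rw [← Finset.sum_coe_sort t (fun v => (if h : v ∈ t then c ⟨v, h⟩ else 0) • v)]
        exact Finset.sum_congr rfl fun i _ => by simp [i.2]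
  rw [himg]
  exact hemb.isClosedMap _ hset

lemma isClosed_coneOf (s : Finset (Euc n)) : IsClosed (coneOf s) := by
  classical
  have main : coneOf s = ⋃ t ∈ {t : Finset (Euc n) | t ⊆ s ∧
      LinearIndependent ℝ (fun v : ↥t => (v : Euc n))}, coneOf t := by
    ext x
    simp only [Set.mem_iUnion, Set.mem_setOf_eq]
    constructor
    · rintro ⟨c, hc, rfl⟩
      obtain ⟨t, hts, hind, c', hc', heq⟩ := exists_indep_rep_aux s.card s c le_rfl hc
      exact ⟨t, ⟨hts, hind⟩, c', hc', heq.symm⟩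
    · rintro ⟨t, ⟨hts, -⟩, hx⟩
      exact coneOf_mono hts hx
  rw [main]
  refine Set.Finite.isClosed_biUnion ?_ ?_
  · exact (Set.Finite.ofFinset s.powerset (fun t => by
      simp [Finset.mem_powerset, Finset.subset_iff]; exact Iff.rfl)).subset (fun t ht => ht.1)
  · exact fun t ht => isClosed_coneOf_indep ht.2

/-- inner products vanish on a span if they vanish on the generators -/
lemma inner_zero_of_mem_span {Q : Set (Euc n)} {y : Euc n} (h : ∀ x ∈ Q, ⟪x, y⟫ = 0) :
    ∀ u ∈ Submodule.span ℝ Q, ⟪u, y⟫ = 0 := by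
  intro u hu
  induction hu using Submodule.span_induction with
  | mem z hz => exact h z hz
  | zero => simp
  | add a b _ _ ha hb => rw [inner_add_left, ha, hb, add_zero]
  | smul t a _ ha => rw [real_inner_smul_left, ha, mul_zero]

/-- every element of the span of a cone is a difference of cone elements -/
lemma span_eq_sub (Q : Set (Euc n)) (h0 : (0:Euc n) ∈ Q)
    (hadd : ∀ x ∈ Q, ∀ y ∈ Q, x + y ∈ Q)
    (hsm : ∀ x ∈ Q, ∀ t : ℝ, 0 ≤ t → t • x ∈ Q) :
    ∀ x ∈ Submodule.span ℝ Q, ∃ a ∈ Q, ∃ b ∈ Q, x = a - b := by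
  intro x hx
  induction hx using Submodule.span_induction with
  | mem y hy => exact ⟨y, hy, 0, h0, by simp⟩
  | zero => exact ⟨0, h0, 0, h0, by simp⟩
  | add y z _ _ hy' hz' =>
    obtain ⟨a, ha, b, hb, rfl⟩ := hy'
    obtain ⟨a', ha', b', hb', rfl⟩ := hz'
    exact ⟨a + a', hadd _ ha _ ha', b + b', hadd _ hb _ hb', by abel⟩
  | smul t y _ hy' =>
    obtain ⟨a, ha, b, hb, rfl⟩ := hy'
    rcases le_total 0 t with h | h
    · exact ⟨t • a, hsm _ ha _ h, t • b, hsm _ hb _ h, by rw [smul_sub]⟩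
    · refine ⟨(-t) • b, hsm _ hb _ (neg_nonneg.2 h), (-t) • a, hsm _ ha _ (neg_nonneg.2 h), ?_⟩
      rw [smul_sub]
      module

/-- bidual theorem specialized to `DualConeSet` -/
lemma dualConeSet_dualConeSet (M : Set (Euc n)) (h0 : (0:Euc n) ∈ M)
    (hadd : ∀ x ∈ M, ∀ y ∈ M, x + y ∈ M)
    (hsm : ∀ x ∈ M, ∀ t : ℝ, 0 ≤ t → t • x ∈ M)
    (hcl : IsClosed M) : DualConeSet (DualConeSet M) = M := by
  let K : ProperCone ℝ (Euc n) :=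
    { carrier := M
      add_mem' := fun {x y} hx hy => hadd x hx y hy
      zero_mem' := h0
      smul_mem' := fun c {x} hx => hsm x hx c c.2
      isClosed' := hcl }
  have h2 := ProperCone.innerDual_innerDual K
  have h3 := congrArg (fun S : ProperCone ℝ (Euc n) => (S : Set (Euc n))) h2
  exact h3

/-- The hard duality fact: the span of the dual face is the orthogonal complement of the span. -/
lemma span_dualFace_eq (Ω G : Set (Euc n)) (hpoly : IsPolyhedralCone Ω)
    (hkey : ∀ a ∈ Ω, ∀ b ∈ Ω, a + b ∈ (Submodule.span ℝ G : Set (Euc n)) →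
      a ∈ Submodule.span ℝ G) :
    Submodule.span ℝ (DualFace Ω G) = (Submodule.span ℝ G)ᗮ := by
  classical
  obtain ⟨s, hs⟩ := hpoly
  have hs' : Ω = coneOf s := hs
  set U : Submodule ℝ (Euc n) := Submodule.span ℝ G with hU
  obtain ⟨T, hT⟩ : ∃ T : Finset (Euc n), Submodule.span ℝ (↑T : Set (Euc n)) = U :=
    IsNoetherian.noetherian U
  set big : Finset (Euc n) := (s ∪ T) ∪ T.image (fun v => -v) with hbig
  set M : Set (Euc n) := coneOf big with hM
  have hsbig : s ⊆ big := fun v hv => by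
    simp [hbig, Finset.mem_union, hv]
  have hΩM : Ω ⊆ M := by rw [hs']; exact coneOf_mono hsbig
  have hUM : (U : Set (Euc n)) ⊆ M := by
    intro b hb
    rw [← hT] at hb
    obtain ⟨d, -, hd⟩ := Submodule.mem_span_finset.mp hb
    rw [← hd]
    refine sum_mem_coneOf T _ (fun v hv => ?_)
    have hvbig : v ∈ big := by simp [hbig, Finset.mem_union, hv]
    have hnvbig : -v ∈ big := by
      simp only [hbig, Finset.mem_union, Finset.mem_image]
      exact Or.inr ⟨v, hv, rfl⟩
    have h1 : max (d v) 0 • v ∈ M := smul_mem_coneOf (le_max_right _ _) (mem_coneOf_of_mem hvbig)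
    have h2 : max (-(d v)) 0 • (-v) ∈ M :=
      smul_mem_coneOf (le_max_right _ _) (mem_coneOf_of_mem hnvbig)
    have h3 : d v • v = max (d v) 0 • v + max (-(d v)) 0 • (-v) := by
      rcases le_total 0 (d v) with h | h
      · rw [max_eq_left h, max_eq_right (by linarith), zero_smul, add_zero]
      · rw [max_eq_right h, max_eq_left (by linarith), zero_smul, zero_add,
          smul_neg, ← neg_smul, neg_neg]
    rw [h3]
    exact add_mem_coneOf h1 h2
  have hMΩU : ∀ x ∈ M, ∃ a ∈ Ω, ∃ b ∈ U, x = a + b := by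
    rintro x ⟨c, hc, rfl⟩
    refine ⟨∑ v ∈ s, c v • v, by rw [hs']; exact ⟨c, hc, rfl⟩,
      ∑ v ∈ big \ s, c v • v, ?_, ?_⟩
    · refine Submodule.sum_mem _ fun v hv => Submodule.smul_mem _ _ ?_
      have hv1 : v ∈ big := (Finset.mem_sdiff.mp hv).1
      have hv2 : v ∉ s := (Finset.mem_sdiff.mp hv).2
      have hv3 : v ∈ T ∨ v ∈ T.image (fun v => -v) := by
        rcases Finset.mem_union.mp hv1 with h | h
        · rcases Finset.mem_union.mp h with h' | h'
          · exact absurd h' hv2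
          · exact Or.inl h'
        · exact Or.inr h
      rcases hv3 with h | h
      · rw [← hT]; exact Submodule.subset_span h
      · obtain ⟨u, hu, rfl⟩ := Finset.mem_image.mp h
        rw [← hT]; exact Submodule.neg_mem _ (Submodule.subset_span hu)
    · rw [← Finset.sum_union (Finset.disjoint_sdiff), Finset.union_sdiff_of_subset hsbig]
  have hbidual := dualConeSet_dualConeSet M (zero_mem_coneOf big)
    (fun x hx y hy => add_mem_coneOf hx hy) (fun x hx t ht => smul_mem_coneOf ht hx)
    (isClosed_coneOf big)
  have hSM : DualFace Ω G = DualConeSet M := by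
    ext y
    constructor
    · rintro ⟨hy1, hy2⟩ x hx
      obtain ⟨a, ha, b, hb, rfl⟩ := hMΩU x hx
      have hby : ⟪b, y⟫ = 0 := inner_zero_of_mem_span hy2 b hb
      rw [inner_add_left, hby, add_zero]
      exact hy1 a ha
    · intro hy
      refine ⟨fun x hx => hy x (hΩM hx), fun x hx => ?_⟩
      have hxU : x ∈ U := Submodule.subset_span hx
      have h1 : 0 ≤ ⟪x, y⟫ := hy x (hUM hxU)
      have h2 : 0 ≤ ⟪-x, y⟫ := hy (-x) (hUM (U.neg_mem hxU))
      rw [inner_neg_left] at h2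
      linarith
  have hle : Submodule.span ℝ (DualFace Ω G) ≤ Uᗮ := by
    rw [Submodule.span_le]
    intro y hy
    rw [SetLike.mem_coe, Submodule.mem_orthogonal]
    exact inner_zero_of_mem_span hy.2
  refine le_antisymm hle ?_
  intro w hw
  obtain ⟨w₁, hw₁, w₂, hw₂, rfl⟩ :=
    (Submodule.span ℝ (DualFace Ω G)).exists_add_mem_mem_orthogonal w
  suffices hz : w₂ = 0 by simpa [hz] using hw₁
  have hw₂S : ∀ y ∈ DualFace Ω G, ⟪y, w₂⟫ = 0 := fun y hy =>
    (Submodule.mem_orthogonal _ _).mp hw₂ y (Submodule.subset_span hy)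
  have h1 : w₂ ∈ M := by
    rw [← hbidual]
    intro y hy
    rw [← hSM] at hy
    exact le_of_eq (hw₂S y hy).symm
  have h2 : -w₂ ∈ M := by
    rw [← hbidual]
    intro y hy
    rw [← hSM] at hy
    rw [inner_neg_right, hw₂S y hy, neg_zero]
  obtain ⟨a, ha, b, hb, hab⟩ := hMΩU w₂ h1
  obtain ⟨a', ha', b', hb', hab'⟩ := hMΩU (-w₂) h2
  have hsum : a + a' = -(b + b') := by
    have : (a + b) + (a' + b') = 0 := by rw [← hab, ← hab']; abel
    linear_combination (norm := module) this
  have haU : a ∈ U := by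
    refine hkey a (by rw [hs'] at ha ⊢; exact ha) a' (by rw [hs'] at ha' ⊢; exact ha') ?_
    rw [hsum]
    exact SetLike.mem_coe.mpr (U.neg_mem (U.add_mem hb hb'))
  have hw₂U : w₂ ∈ U := by rw [hab]; exact U.add_mem haU hb
  -- but w₂ ⊥ U as well
  have hwperp : w₂ ∈ Uᗮ := by
    have hw₁U : w₁ ∈ Uᗮ := hle hw₁
    have := Uᗮ.sub_mem hw hw₁U
    simpa using this
  have : ⟪w₂, w₂⟫ = 0 := (Submodule.mem_orthogonal _ _).mp hwperp w₂ hw₂U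
  exact inner_self_eq_zero.mp this

end ExtremeRayAux

open ExtremeRayAux in
/-- for faces `E ⊂ F` of a pointed solid polyhedral cone `Ω` with
`dim E = dim F − 1`, the set `(F^⊥ ∩ Ω*)^⊥ ∩ Ω_E^⊛` is an extreme ray of `Ω_E^⊛`;
it contains a unique unit vector `e_F(E)`, which lies in `E^⊥ ∩ span F`. -/
theorem extreme_ray_unit_vector {n : ℕ} (Ω E F : Set (Euc n))
    (hconv : Convex ℝ Ω) (hcone : IsConeSet Ω) (hclosed : IsClosed Ω)
    (hpointed : IsPointedSet Ω) (hsolid : IsSolidSet Ω) (hpoly : IsPolyhedralCone Ω)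
    (hE : IsFaceOfCone Ω E) (hF : IsFaceOfCone Ω F) (hEF : E ⊆ F)
    (hdim : Module.finrank ℝ (Submodule.span ℝ F)
      = Module.finrank ℝ (Submodule.span ℝ E) + 1) :
    IsExtremeRayOf (CircledDual Ω E)
      ({x | ∀ y ∈ DualFace Ω F, ⟪x, y⟫ = 0} ∩ CircledDual Ω E) ∧
    (∃! e : Euc n,
      e ∈ {x | ∀ y ∈ DualFace Ω F, ⟪x, y⟫ = 0} ∩ CircledDual Ω E ∧ ‖e‖ = 1) ∧
    (∀ e : Euc n,
      e ∈ {x | ∀ y ∈ DualFace Ω F, ⟪x, y⟫ = 0} ∩ CircledDual Ω E → ‖e‖ = 1 →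
      (∀ x ∈ E, ⟪x, e⟫ = 0) ∧ e ∈ Submodule.span ℝ F) := by
  classical
  -- basic properties of Ω
  have h0Ω : (0 : Euc n) ∈ Ω := by
    obtain ⟨s, hs⟩ := hpoly
    rw [hs]
    exact ⟨0, fun _ => le_rfl, by simp⟩
  have hmid : ∀ (Q : Set (Euc n)), Convex ℝ Q → IsConeSet Q →
      ∀ x ∈ Q, ∀ y ∈ Q, x + y ∈ Q := by
    intro Q hQc hQcone x hx y hy
    have h2 : (1/2 : ℝ) • x + (1/2 : ℝ) • y ∈ Q :=
      hQc hx hy (by norm_num) (by norm_num) (by norm_num)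
    have h3 := hQcone _ h2 2 (by norm_num)
    rw [smul_add, smul_smul, smul_smul] at h3
    norm_num at h3
    exact h3
  have hΩadd : ∀ x ∈ Ω, ∀ y ∈ Ω, x + y ∈ Ω := hmid Ω hconv hcone
  have hpt : ∀ x ∈ Ω, -x ∈ Ω → x = 0 := by
    intro x hx hnx
    by_contra hne
    refine hpointed ⟨0, x, hne, fun t => ?_⟩
    rcases le_total 0 t with h | h
    · simpa using hcone x hx t h
    · have := hcone _ hnx (-t) (neg_nonneg.2 h)
      rw [neg_smul_neg] at this
      simpa using this
  -- the key hypothesis for span_dualFace_eq, valid for any face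
  have hkey : ∀ (G : Set (Euc n)), IsFaceOfCone Ω G →
      ∀ a ∈ Ω, ∀ b ∈ Ω, a + b ∈ (Submodule.span ℝ G : Set (Euc n)) →
        a ∈ Submodule.span ℝ G := by
    intro G hG a ha b hb hab
    rcases Set.eq_empty_or_nonempty G with rfl | ⟨g₀, hg₀⟩
    · rw [Submodule.span_empty] at hab ⊢
      have : a + b = 0 := by simpa using hab
      have hnb : a = -b := by linear_combination (norm := module) this
      have : a = 0 := hpt a ha (by rw [hnb, neg_neg]; exact hb)
      simp [this]
    · have h0G : (0 : Euc n) ∈ G := by simpa using hG.2.2.1 g₀ hg₀ 0 le_rfl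
      have hGadd := hmid G hG.2.1 hG.2.2.1
      obtain ⟨k₁, hk₁, k₂, hk₂, hdiff⟩ :=
        span_eq_sub G h0G hGadd (fun x hx t ht => hG.2.2.1 x hx t ht) _ hab
      have h1 : (a + b) + k₂ ∈ G := by
        rw [hdiff, sub_add_cancel]
        exact hk₁
      have h2 : a + b ∈ G :=
        (hG.2.2.2 (a+b) (hΩadd a ha b hb) k₂ (hG.1 hk₂) h1).1
      exact Submodule.subset_span (hG.2.2.2 a ha b hb h2).1
  have hAE := span_dualFace_eq Ω E hpoly (hkey E hE)
  have hAF := span_dualFace_eq Ω F hpoly (hkey F hF)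
  -- notation
  set D : Set (Euc n) := DualFace Ω E with hDdef
  set K : Set (Euc n) := DualFace Ω F with hKdef
  set DE : Submodule ℝ (Euc n) := Submodule.span ℝ D with hDEdef
  set DF : Submodule ℝ (Euc n) := Submodule.span ℝ K with hDFdef
  -- basic facts about D and K
  have hKD : K ⊆ D := fun y hy => ⟨hy.1, fun x hx => hy.2 x (hEF hx)⟩
  have h0D : (0 : Euc n) ∈ D := ⟨fun x _ => by simp, fun x _ => by simp⟩
  have h0K : (0 : Euc n) ∈ K := ⟨fun x _ => by simp, fun x _ => by simp⟩
  have hDadd : ∀ x ∈ D, ∀ y ∈ D, x + y ∈ D := by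
    rintro x ⟨hx1, hx2⟩ y ⟨hy1, hy2⟩
    exact ⟨fun z hz => by
        have := add_nonneg (hx1 z hz) (hy1 z hz); rwa [← inner_add_right] at this,
      fun z hz => by rw [inner_add_right, hx2 z hz, hy2 z hz, add_zero]⟩
  have hDsm : ∀ x ∈ D, ∀ t : ℝ, 0 ≤ t → t • x ∈ D := by
    rintro x ⟨hx1, hx2⟩ t ht
    exact ⟨fun z hz => by rw [real_inner_smul_right]; exact mul_nonneg ht (hx1 z hz),
      fun z hz => by rw [real_inner_smul_right, hx2 z hz, mul_zero]⟩
  have hKadd : ∀ x ∈ K, ∀ y ∈ K, x + y ∈ K := by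
    rintro x ⟨hx1, hx2⟩ y ⟨hy1, hy2⟩
    exact ⟨fun z hz => by
        have := add_nonneg (hx1 z hz) (hy1 z hz); rwa [← inner_add_right] at this,
      fun z hz => by rw [inner_add_right, hx2 z hz, hy2 z hz, add_zero]⟩
  have hKsm : ∀ x ∈ K, ∀ t : ℝ, 0 ≤ t → t • x ∈ K := by
    rintro x ⟨hx1, hx2⟩ t ht
    exact ⟨fun z hz => by rw [real_inner_smul_right]; exact mul_nonneg ht (hx1 z hz),
      fun z hz => by rw [real_inner_smul_right, hx2 z hz, mul_zero]⟩
  have faceK : ∀ y ∈ D, ∀ y' ∈ D, y + y' ∈ K → y ∈ K ∧ y' ∈ K := by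
    rintro y hy y' hy' ⟨_, hsum2⟩
    have hxy : ∀ x ∈ F, ⟪x, y⟫ = 0 ∧ ⟪x, y'⟫ = 0 := by
      intro x hx
      have h1 : 0 ≤ ⟪x, y⟫ := hy.1 x (hF.1 hx)
      have h2 : 0 ≤ ⟪x, y'⟫ := hy'.1 x (hF.1 hx)
      have h3 : ⟪x, y⟫ + ⟪x, y'⟫ = 0 := by
        rw [← inner_add_right]; exact hsum2 x hx
      constructor <;> linarith
    exact ⟨⟨hy.1, fun x hx => (hxy x hx).1⟩, ⟨hy'.1, fun x hx => (hxy x hx).2⟩⟩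
  have hDFDE : DF ≤ DE := Submodule.span_mono hKD
  -- dimension count
  set L : Submodule ℝ (Euc n) := DFᗮ ⊓ DE with hLdef
  have hrkL : Module.finrank ℝ L = 1 := by
    have e1 : Module.finrank ℝ (Submodule.span ℝ E)
        + Module.finrank ℝ (Submodule.span ℝ E)ᗮ = n := by
      simpa using Submodule.finrank_add_finrank_orthogonal (K := Submodule.span ℝ E)
    have e2 : Module.finrank ℝ (Submodule.span ℝ F)
        + Module.finrank ℝ (Submodule.span ℝ F)ᗮ = n := by
      simpa using Submodule.finrank_add_finrank_orthogonal (K := Submodule.span ℝ F)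
    have e3 : Module.finrank ℝ DF + Module.finrank ℝ L = Module.finrank ℝ DE :=
      Submodule.finrank_add_inf_finrank_orthogonal hDFDE
    have e4 : Module.finrank ℝ DE = Module.finrank ℝ (Submodule.span ℝ E)ᗮ :=
      congrArg (fun W : Submodule ℝ (Euc n) => Module.finrank ℝ W) hAE
    have e5 : Module.finrank ℝ DF = Module.finrank ℝ (Submodule.span ℝ F)ᗮ :=
      congrArg (fun W : Submodule ℝ (Euc n) => Module.finrank ℝ W) hAF
    omega
  -- generic facts about nonzero elements of L
  have hspanL : ∀ u, u ∈ L → u ≠ 0 → L = Submodule.span ℝ {u} := by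
    intro u hu hu0
    refine (Submodule.eq_of_le_of_finrank_eq
      ((Submodule.span_le (R := ℝ)).mpr (Set.singleton_subset_iff.mpr hu)) ?_).symm
    rw [finrank_span_singleton hu0, hrkL]
  have memDF_of : ∀ u, u ∈ L → u ≠ 0 → ∀ x, x ∈ DE → ⟪u, x⟫ = 0 → x ∈ DF := by
    intro u hu hu0 x hxDE hux
    obtain ⟨p, hp, q, hq, hxpq⟩ := DF.exists_add_mem_mem_orthogonal x
    have hqDE : q ∈ DE := by
      have : q = x - p := by rw [hxpq]; abel
      rw [this]
      exact DE.sub_mem hxDE (hDFDE hp)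
    have hqL : q ∈ L := ⟨hq, hqDE⟩
    obtain ⟨t, ht⟩ := Submodule.mem_span_singleton.mp ((hspanL u hu hu0) ▸ hqL)
    have hup : ⟪u, p⟫ = 0 := by
      rw [real_inner_comm]
      exact (Submodule.mem_orthogonal _ _).mp hu.1 p hp
    have ht0 : t * ⟪u, u⟫ = 0 := by
      have : ⟪u, x⟫ = ⟪u, p⟫ + t * ⟪u, u⟫ := by
        rw [hxpq, ← ht, inner_add_right, real_inner_smul_right]
      rw [hux, hup, zero_add] at this
      linarith
    have : t = 0 := by
      rcases mul_eq_zero.mp ht0 with h | h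
      · exact h
      · exact absurd (inner_self_eq_zero.mp h) hu0
    rw [hxpq, ← ht, this, zero_smul, add_zero]
    exact hp
  have faceDF : ∀ y ∈ D, y ∈ (DF : Set (Euc n)) → y ∈ K := by
    intro y hyD hyDF
    obtain ⟨k₁, hk₁, k₂, hk₂, hdiff⟩ := span_eq_sub K h0K hKadd hKsm y hyDF
    have h1 : y + k₂ ∈ K := by rw [hdiff, sub_add_cancel]; exact hk₁
    exact (faceK y hyD k₂ (hKD hk₂) h1).1
  have hdich : ∀ u, u ∈ L → u ≠ 0 →
      (∀ y ∈ D, 0 ≤ ⟪u, y⟫) ∨ (∀ y ∈ D, ⟪u, y⟫ ≤ 0) := by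
    intro u hu hu0
    by_contra hcon
    push_neg at hcon
    obtain ⟨⟨y, hy, hy1⟩, ⟨y', hy', hy2⟩⟩ := hcon
    -- hy1 : ¬ 0 ≤ ⟪u,y⟫ i.e. < 0 ; hy2 : 0 < ⟪u,y'⟫
    have hneg : ⟪u, y⟫ < 0 := hy1
    have hpos : 0 < ⟪u, y'⟫ := hy2
    have hw1 : ⟪u, y'⟫ • y ∈ D := hDsm y hy _ hpos.le
    have hw2 : (-⟪u, y⟫) • y' ∈ D := hDsm y' hy' _ (by linarith)
    set w : Euc n := ⟪u, y'⟫ • y + (-⟪u, y⟫) • y' with hwdef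
    have hwD : w ∈ D := hDadd _ hw1 _ hw2
    have hvw : ⟪u, w⟫ = 0 := by
      rw [hwdef, inner_add_right, real_inner_smul_right, real_inner_smul_right]
      ring
    have hwK : w ∈ K := faceDF w hwD (memDF_of u hu hu0 w (Submodule.subset_span hwD) hvw)
    have h6 := (faceK _ hw1 _ hw2 hwK).2
    have hy'K : y' ∈ K := by
      have h7 := hKsm _ h6 (-⟪u, y⟫)⁻¹ (inv_nonneg.mpr (by linarith))
      rwa [smul_smul, inv_mul_cancel₀ (by linarith), one_smul] at h7
    have : ⟪y', u⟫ = 0 :=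
      (Submodule.mem_orthogonal _ _).mp hu.1 y' (Submodule.subset_span hy'K)
    rw [real_inner_comm] at this
    linarith
  -- get an oriented generator of L
  obtain ⟨v, hvL, hv0, hvpos⟩ :
      ∃ v, v ∈ L ∧ v ≠ 0 ∧ ∀ y ∈ D, 0 ≤ ⟪v, y⟫ := by
    obtain ⟨v, hvL, hv0⟩ : ∃ v, v ∈ L ∧ v ≠ (0 : Euc n) := by
      by_contra hcon
      push_neg at hcon
      have : L = ⊥ := (Submodule.eq_bot_iff L).mpr (fun x hx => hcon x hx)
      rw [this, finrank_bot] at hrkL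
      omega
    rcases hdich v hvL hv0 with h | h
    · exact ⟨v, hvL, hv0, h⟩
    · exact ⟨-v, L.neg_mem hvL, neg_ne_zero.2 hv0,
        fun y hy => by rw [inner_neg_left]; linarith [h y hy]⟩
  have hLv : L = Submodule.span ℝ {v} := hspanL v hvL hv0
  -- positive pairing witness
  obtain ⟨y₀, hy₀D, hy₀pos⟩ : ∃ y₀ ∈ D, 0 < ⟪v, y₀⟫ := by
    by_contra hcon
    push_neg at hcon
    have hvv : ⟪v, v⟫ = 0 := by
      have hall : ∀ y ∈ D, ⟪y, v⟫ = 0 := fun y hy => by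
        rw [real_inner_comm]
        exact le_antisymm (hcon y hy) (hvpos y hy)
      exact inner_zero_of_mem_span hall v hvL.2
    exact hv0 (inner_self_eq_zero.mp hvv)
  -- characterization of the ray
  have hRchar : ({x | ∀ y ∈ K, ⟪x, y⟫ = 0} ∩ CircledDual Ω E)
      = {x | ∃ t : ℝ, 0 ≤ t ∧ x = t • v} := by
    ext x
    constructor
    · rintro ⟨hx1, hx2, hx3⟩
      have hxDF : x ∈ DFᗮ := by
        rw [Submodule.mem_orthogonal]
        exact inner_zero_of_mem_span (fun y hy => by
          rw [real_inner_comm]; exact hx1 y hy)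
      have hxL : x ∈ L := ⟨hxDF, hx2⟩
      obtain ⟨t, ht⟩ := Submodule.mem_span_singleton.mp (hLv ▸ hxL)
      refine ⟨t, ?_, ht.symm⟩
      have h1 := hx3 y₀ hy₀D
      rw [← ht] at h1
      rw [real_inner_smul_left] at h1
      nlinarith
    · rintro ⟨t, ht, rfl⟩
      refine ⟨fun y hy => ?_, DE.smul_mem t hvL.2, fun y hy => ?_⟩
      · have : ⟪y, v⟫ = 0 :=
          (Submodule.mem_orthogonal _ _).mp hvL.1 y (Submodule.subset_span hy)
        rw [real_inner_smul_left, real_inner_comm, this, mul_zero]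
      · rw [real_inner_smul_left]
        exact mul_nonneg ht (hvpos y hy)
  have hvnorm : ‖v‖ ≠ 0 := norm_ne_zero_iff.mpr hv0
  refine ⟨⟨fun x hx => hx.2, ⟨v, hv0, hRchar⟩, ?_⟩, ?_, ?_⟩
  · -- extremality
    intro x hx y hy hxy
    have hsplit : ∀ z ∈ K, ⟪x, z⟫ = 0 ∧ ⟪y, z⟫ = 0 := by
      intro z hz
      have h1 : 0 ≤ ⟪x, z⟫ := hx.2 z (hKD hz)
      have h2 : 0 ≤ ⟪y, z⟫ := hy.2 z (hKD hz)
      have h3 : ⟪x, z⟫ + ⟪y, z⟫ = 0 := by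
        rw [← inner_add_left]; exact hxy.1 z hz
      constructor <;> linarith
    exact ⟨⟨fun z hz => (hsplit z hz).1, hx⟩, ⟨fun z hz => (hsplit z hz).2, hy⟩⟩
  · -- unique unit vector
    refine ⟨‖v‖⁻¹ • v, ⟨?_, ?_⟩, ?_⟩
    · rw [hRchar]
      exact ⟨‖v‖⁻¹, inv_nonneg.mpr (norm_nonneg v), rfl⟩
    · rw [norm_smul, norm_inv, norm_norm, inv_mul_cancel₀ hvnorm]
    · rintro e ⟨he, hnorm⟩
      rw [hRchar] at he
      obtain ⟨t, ht, rfl⟩ := he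
      have h1 : t * ‖v‖ = 1 := by
        rw [norm_smul, Real.norm_eq_abs, abs_of_nonneg ht] at hnorm
        exact hnorm
      have h2 : t = ‖v‖⁻¹ := eq_inv_of_mul_eq_one_left h1
      rw [h2]
  · -- membership of the unit vector
    rintro e ⟨he1, he2, he3⟩ _
    constructor
    · intro x hx
      have hall : ∀ z ∈ D, ⟪z, x⟫ = 0 := fun z hz => by
        rw [real_inner_comm]; exact hz.2 x hx
      rw [real_inner_comm]
      exact inner_zero_of_mem_span hall e he2
    · have heDF : e ∈ DFᗮ := by
        rw [Submodule.mem_orthogonal]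
        exact inner_zero_of_mem_span (fun y hy => by
          rw [real_inner_comm]; exact he1 y hy)
      rw [hAF, Submodule.orthogonal_orthogonal] at heDF
      exact heDF
end
end

section
/- Let (f_r)_{r∈[0,1]} be the family of self-maps of S^{j−1} ⊂ ℝ^{j−1} × ℝ given by f_r(x, s) = normalize(u_r·x, min(1, −1 + 2(s+1)/(r+1))) where u_r ≥ 0 is chosen so that the image lies on the sphere. Then each f_r is a well-defined continuous map S^{j−1} → S^{j−1} of degree 1, mapping every point of height s ≥ r to the north pole (0, …, 0, 1), and (r, x) ↦ f_r(x) is jointly continuous. -/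
noncomputable section

namespace HPF

noncomputable def tF (r s : ℝ) : ℝ := min 1 (-1 + 2 * (s + 1) / (r + 1))
noncomputable def uF (r s : ℝ) : ℝ := 2 * Real.sqrt (max 0 ((r - s) / (1 - s))) / (r + 1)

def NP (d : ℕ) : Euc (d + 1) := EuclideanSpace.single (Fin.last d) 1

noncomputable def zF (d : ℕ) (r : ℝ) (y : Euc (d + 1)) : Euc (d + 1) :=
  uF r (y (Fin.last d)) • (y - y (Fin.last d) • NP d) + tF r (y (Fin.last d)) • NP d

variable {d : ℕ} {r s τ : ℝ} {y : Euc (d + 1)}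

lemma uF_nonneg (hr : 0 ≤ r) : 0 ≤ uF r s := by
  unfold uF; positivity

lemma le_tF (hr0 : 0 ≤ r) (hr1 : r ≤ 1) (hs1 : -1 ≤ s) (hs2 : s ≤ 1) : s ≤ tF r s := by
  refine le_min hs2 ?_
  have h : (s + 1) * (r + 1) ≤ 2 * (s + 1) := by nlinarith
  have h2 : (s + 1) ≤ 2 * (s + 1) / (r + 1) :=
    (le_div_iff₀ (by linarith : (0:ℝ) < r + 1)).mpr h
  linarith

lemma uF_eq_zero (hrs : r ≤ s) (hs : s ≤ 1) : uF r s = 0 := by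
  have h1 : (r - s) / (1 - s) ≤ 0 :=
    div_nonpos_of_nonpos_of_nonneg (by linarith) (by linarith)
  unfold uF
  rw [max_eq_left h1, Real.sqrt_zero]
  simp

lemma tF_eq_one (hr0 : 0 ≤ r) (hrs : r ≤ s) : tF r s = 1 := by
  have hpos : (0:ℝ) < r + 1 := by linarith
  refine min_eq_left ?_
  have h2 : 2 ≤ 2 * (s + 1) / (r + 1) := by
    rw [le_div_iff₀ hpos]; linarith
  linarith

lemma tF_at_neg_one : tF r (-1) = -1 := by
  unfold tF; norm_num

lemma uF_le_two (hr0 : 0 ≤ r) (hr1 : r ≤ 1) (hs : s ≤ 1) : uF r s ≤ 2 := by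
  have hm : max 0 ((r - s) / (1 - s)) ≤ 1 := by
    rcases eq_or_lt_of_le hs with h | h
    · subst h
      simp
    · refine max_le zero_le_one ?_
      rw [div_le_one (by linarith)]
      linarith
  have hsq : Real.sqrt (max 0 ((r - s) / (1 - s))) ≤ 1 := by
    calc Real.sqrt (max 0 ((r - s) / (1 - s))) ≤ Real.sqrt 1 := Real.sqrt_le_sqrt hm
    _ = 1 := Real.sqrt_one
  have h2 : 2 * Real.sqrt (max 0 ((r - s) / (1 - s))) ≤ 2 := by linarith
  have := div_le_self (by positivity : (0:ℝ) ≤ 2 * Real.sqrt (max 0 ((r - s) / (1 - s))))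
    (by linarith : (1:ℝ) ≤ r + 1)
  unfold uF
  linarith

lemma norm_identity (hr0 : 0 ≤ r) (hr1 : r ≤ 1) (hs1 : -1 ≤ s) (hs2 : s ≤ 1) :
    uF r s ^ 2 * (1 - s ^ 2) + tF r s ^ 2 = 1 := by
  rcases le_or_gt r s with h | h
  · rw [uF_eq_zero h hs2, tF_eq_one hr0 h]; ring
  · have hs1' : s < 1 := lt_of_lt_of_le h hr1
    have h1s : (0:ℝ) < 1 - s := by linarith
    have hq0 : 0 ≤ (r - s) / (1 - s) := div_nonneg (by linarith) h1s.le
    have ht : tF r s = -1 + 2 * (s + 1) / (r + 1) := by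
      refine min_eq_right ?_
      have : 2 * (s + 1) / (r + 1) ≤ 2 := by
        rw [div_le_iff₀ (by linarith : (0:ℝ) < r + 1)]; linarith
      linarith
    have hu2 : uF r s ^ 2 = 4 * ((r - s) / (1 - s)) / (r + 1) ^ 2 := by
      unfold uF
      rw [max_eq_right hq0, div_pow, mul_pow, Real.sq_sqrt hq0]
      norm_num
    rw [hu2, ht]
    have hne1 : (r:ℝ) + 1 ≠ 0 := by linarith
    have hne2 : (1:ℝ) - s ≠ 0 := by linarith
    field_simp
    ring

lemma NP_last : NP d (Fin.last d) = 1 := by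
  simp [NP, EuclideanSpace.single_apply]

lemma NP_castSucc (i : Fin d) : NP d i.castSucc = 0 := by
  simp [NP, EuclideanSpace.single_apply, (Fin.castSucc_lt_last i).ne]

lemma zF_last : zF d r y (Fin.last d) = tF r (y (Fin.last d)) := by
  simp [zF, NP_last, PiLp.add_apply, PiLp.smul_apply, PiLp.sub_apply, smul_eq_mul]

lemma zF_castSucc (i : Fin d) :
    zF d r y i.castSucc = uF r (y (Fin.last d)) * y i.castSucc := by
  simp [zF, NP_castSucc, PiLp.add_apply, PiLp.smul_apply, PiLp.sub_apply, smul_eq_mul]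

lemma sum_sq {n : ℕ} (x : Euc n) : ∑ i, x i ^ 2 = ‖x‖ ^ 2 := by
  rw [EuclideanSpace.norm_eq, Real.sq_sqrt (by positivity)]
  simp [Real.norm_eq_abs, sq_abs]

lemma coord_bounds {n : ℕ} (x : Euc n) (hx : ‖x‖ = 1) (i : Fin n) :
    -1 ≤ x i ∧ x i ≤ 1 := by
  have h1 : x i ^ 2 ≤ 1 := by
    have := Finset.single_le_sum (f := fun j => x j ^ 2)
      (fun j _ => sq_nonneg (x j)) (Finset.mem_univ i)
    rw [sum_sq, hx] at this
    simpa using this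
  constructor <;> nlinarith

lemma zF_mem (hr0 : 0 ≤ r) (hr1 : r ≤ 1) (hy : ‖y‖ = 1) : ‖zF d r y‖ = 1 := by
  set s := y (Fin.last d) with hs
  obtain ⟨hs1, hs2⟩ := coord_bounds y hy (Fin.last d)
  have hsum : ∑ i, zF d r y i ^ 2 = uF r s ^ 2 * (1 - s ^ 2) + tF r s ^ 2 := by
    rw [Fin.sum_univ_castSucc]
    have hx : ∑ i : Fin d, y i.castSucc ^ 2 = 1 - s ^ 2 := by
      have h2 : ∑ i, y i ^ 2 = 1 := by rw [sum_sq, hy]; norm_num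
      rw [Fin.sum_univ_castSucc] at h2
      linarith
    simp_rw [zF_castSucc, zF_last, mul_pow]
    rw [← Finset.mul_sum, hx]
  have hval : ‖zF d r y‖ ^ 2 = 1 := by
    rw [← sum_sq, hsum, norm_identity hr0 hr1 hs1 hs2]
  have h0 := norm_nonneg (zF d r y)
  nlinarith

lemma zF_north (hr0 : 0 ≤ r) (hrs : r ≤ y (Fin.last d)) (hs : y (Fin.last d) ≤ 1) :
    zF d r y = NP d := by
  unfold zF
  rw [uF_eq_zero hrs hs, tF_eq_one hr0 hrs]
  simp

lemma eq_NP (hy : ‖y‖ = 1) (hlast : y (Fin.last d) = 1) : y = NP d := by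
  have h2 : ∑ i, y i ^ 2 = 1 := by rw [sum_sq, hy]; norm_num
  rw [Fin.sum_univ_castSucc, hlast] at h2
  have hz : ∀ i ∈ Finset.univ, y (Fin.castSucc i) ^ 2 = 0 := by
    rw [← Finset.sum_eq_zero_iff_of_nonneg (fun i _ => sq_nonneg _)]
    norm_num at h2
    linarith
  ext i
  induction i using Fin.lastCases with
  | last => rw [hlast, NP_last]
  | cast j =>
    rw [NP_castSucc]
    have := hz j (Finset.mem_univ j)
    exact pow_eq_zero_iff (by norm_num) |>.mp this

lemma zF_cont :
    Continuous (fun p : Set.Icc (0:ℝ) 1 × Metric.sphere (0 : Euc (d+1)) 1 =>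
      zF d p.1 (p.2 : Euc (d+1))) := by
  have hrc : Continuous (fun p : Set.Icc (0:ℝ) 1 × Metric.sphere (0 : Euc (d+1)) 1 =>
      (p.1 : ℝ)) := continuous_subtype_val.comp continuous_fst
  have hsc : Continuous (fun p : Set.Icc (0:ℝ) 1 × Metric.sphere (0 : Euc (d+1)) 1 =>
      ((p.2 : Euc (d+1)) (Fin.last d))) :=
    (EuclideanSpace.proj (Fin.last d)).continuous.comp
      (continuous_subtype_val.comp continuous_snd)
  have hrne : ∀ p : Set.Icc (0:ℝ) 1 × Metric.sphere (0 : Euc (d+1)) 1, (p.1 : ℝ) + 1 ≠ 0 := by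
    intro p
    have := p.1.2.1
    dsimp at this ⊢
    intro h
    linarith
  have htc : Continuous (fun p : Set.Icc (0:ℝ) 1 × Metric.sphere (0 : Euc (d+1)) 1 =>
      tF (p.1 : ℝ) ((p.2 : Euc (d+1)) (Fin.last d))) := by
    unfold tF
    exact continuous_const.min (continuous_const.add
      ((continuous_const.mul (hsc.add continuous_const)).div
        (hrc.add continuous_const) hrne))
  have hxc : Continuous (fun p : Set.Icc (0:ℝ) 1 × Metric.sphere (0 : Euc (d+1)) 1 =>
      ((p.2 : Euc (d+1)) - ((p.2 : Euc (d+1)) (Fin.last d)) • NP d)) :=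
    (continuous_subtype_val.comp continuous_snd).sub (hsc.smul continuous_const)
  have hnorm : ∀ p : Set.Icc (0:ℝ) 1 × Metric.sphere (0 : Euc (d+1)) 1,
      ‖(p.2 : Euc (d+1))‖ = 1 := by
    intro p
    have := p.2.2
    rwa [mem_sphere_zero_iff_norm] at this
  have huxc : Continuous (fun p : Set.Icc (0:ℝ) 1 × Metric.sphere (0 : Euc (d+1)) 1 =>
      uF (p.1:ℝ) ((p.2:Euc (d+1)) (Fin.last d)) •
        ((p.2 : Euc (d+1)) - ((p.2 : Euc (d+1)) (Fin.last d)) • NP d)) := by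
    rw [continuous_iff_continuousAt]
    intro p₀
    obtain ⟨_, hs2⟩ := coord_bounds _ (hnorm p₀) (Fin.last d)
    rcases lt_or_eq_of_le hs2 with hlt | heq
    · have hq : ContinuousAt (fun p : Set.Icc (0:ℝ) 1 × Metric.sphere (0 : Euc (d+1)) 1 =>
          ((p.1:ℝ) - (p.2:Euc (d+1)) (Fin.last d)) / (1 - (p.2:Euc (d+1)) (Fin.last d))) p₀ :=
        ContinuousAt.div ((hrc.sub hsc).continuousAt) ((continuous_const.sub hsc).continuousAt)
          (by dsimp; intro h; linarith)
      have hu : ContinuousAt (fun p : Set.Icc (0:ℝ) 1 × Metric.sphere (0 : Euc (d+1)) 1 =>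
          uF (p.1:ℝ) ((p.2:Euc (d+1)) (Fin.last d))) p₀ := by
        unfold uF
        exact (continuousAt_const.mul ((Real.continuous_sqrt.continuousAt).comp
          (continuousAt_const.max hq))).div
          ((hrc.add continuous_const).continuousAt) (hrne p₀)
      exact hu.smul hxc.continuousAt
    · have hx0 : (p₀.2 : Euc (d+1)) - ((p₀.2 : Euc (d+1)) (Fin.last d)) • NP d = 0 := by
        rw [heq, one_smul, eq_NP (hnorm p₀) heq, sub_self]
      have hval : uF (p₀.1:ℝ) ((p₀.2:Euc (d+1)) (Fin.last d)) •
          ((p₀.2 : Euc (d+1)) - ((p₀.2 : Euc (d+1)) (Fin.last d)) • NP d) = 0 := by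
        rw [hx0, smul_zero]
      have htend : Filter.Tendsto (fun p : Set.Icc (0:ℝ) 1 × Metric.sphere (0 : Euc (d+1)) 1 =>
          uF (p.1:ℝ) ((p.2:Euc (d+1)) (Fin.last d)) •
            ((p.2 : Euc (d+1)) - ((p.2 : Euc (d+1)) (Fin.last d)) • NP d)) (nhds p₀) (nhds 0) := by
        apply squeeze_zero_norm (a := fun p : Set.Icc (0:ℝ) 1 × Metric.sphere (0 : Euc (d+1)) 1 =>
          2 * ‖(p.2 : Euc (d+1)) - ((p.2 : Euc (d+1)) (Fin.last d)) • NP d‖)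
        · intro p
          rw [norm_smul, Real.norm_eq_abs,
            abs_of_nonneg (uF_nonneg p.1.2.1)]
          exact mul_le_mul_of_nonneg_right
            (uF_le_two p.1.2.1 p.1.2.2 (coord_bounds _ (hnorm p) (Fin.last d)).2)
            (norm_nonneg _)
        · have := ((continuous_const : Continuous fun _ : Set.Icc (0:ℝ) 1 × Metric.sphere (0 : Euc (d+1)) 1 => (2:ℝ)).mul hxc.norm).tendsto p₀
          simp only [Pi.mul_apply] at this
          rw [hx0, norm_zero, mul_zero] at this
          exact this
      unfold ContinuousAt
      simpa [hval] using htend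
  unfold zF
  exact huxc.add (htc.smul continuous_const)

lemma zF_ne_neg (hr0 : 0 ≤ r) (hr1 : r ≤ 1) (hy : ‖y‖ = 1) : zF d r y ≠ -y := by
  intro h
  set s := y (Fin.last d) with hsdef
  obtain ⟨hs1, hs2⟩ := coord_bounds y hy (Fin.last d)
  have hlast : tF r s = -s := by
    have h1 : zF d r y (Fin.last d) = (-y : Euc (d+1)) (Fin.last d) := by rw [h]
    rw [zF_last] at h1
    simpa using h1
  have hcs : ∀ i : Fin d, y i.castSucc = 0 := by
    intro i
    have h1 : zF d r y i.castSucc = (-y : Euc (d+1)) i.castSucc := by rw [h]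
    rw [zF_castSucc] at h1
    have hneg : (-y : Euc (d+1)) i.castSucc = -(y i.castSucc) := by simp
    rw [hneg] at h1
    have h2 : (uF r s + 1) * y i.castSucc = 0 := by
      rw [add_mul, one_mul, hsdef, h1]; ring
    rcases mul_eq_zero.mp h2 with h3 | h3
    · exact absurd h3 (ne_of_gt (by linarith [uF_nonneg (r := r) (s := s) hr0]))
    · exact h3
  have hsq : s ^ 2 = 1 := by
    have h2 : ∑ i, y i ^ 2 = 1 := by rw [sum_sq, hy]; norm_num
    rw [Fin.sum_univ_castSucc] at h2
    have hz0 : ∑ i : Fin d, y i.castSucc ^ 2 = 0 :=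
      Finset.sum_eq_zero (fun i _ => by rw [hcs i]; ring)
    rw [hz0] at h2
    linarith
  have hst := le_tF hr0 hr1 hs1 hs2
  have hs_nonpos : s ≤ 0 := by rw [hlast] at hst; linarith
  have hsm1 : s = -1 := by nlinarith
  rw [hsm1, tF_at_neg_one] at hlast
  norm_num at hlast

lemma g_ne_zero (hr0 : 0 ≤ r) (hr1 : r ≤ 1) (hy : ‖y‖ = 1) (hτ0 : 0 ≤ τ) (hτ1 : τ ≤ 1) :
    (1 - τ) • zF d r y + τ • y ≠ 0 := by
  intro h
  have hz : ‖zF d r y‖ = 1 := zF_mem hr0 hr1 hy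
  have h1 : (1 - τ) • zF d r y = -(τ • y) := eq_neg_of_add_eq_zero_left h
  have h2 : |1 - τ| = |τ| := by
    have := congrArg norm h1
    rwa [norm_neg, norm_smul, norm_smul, hz, hy, mul_one, mul_one,
      Real.norm_eq_abs, Real.norm_eq_abs] at this
  have hτ : τ = 1/2 := by
    rw [abs_of_nonneg (by linarith), abs_of_nonneg hτ0] at h2
    linarith
  subst hτ
  have h3 : zF d r y = -y := by
    have h4 : (1/2 : ℝ) • zF d r y = (1/2 : ℝ) • (-y) := by
      rw [smul_neg]
      convert h1 using 2
      norm_num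
    exact smul_right_injective (Euc (d+1)) (by norm_num : (1/2 : ℝ) ≠ 0) h4
  exact zF_ne_neg hr0 hr1 hy h3

lemma sphere_norm (y : Metric.sphere (0 : Euc (d+1)) 1) : ‖(y : Euc (d+1))‖ = 1 := by
  have := y.2
  rwa [mem_sphere_zero_iff_norm] at this

lemma zF_cont_r (r : Set.Icc (0:ℝ) 1) :
    Continuous (fun y : Metric.sphere (0 : Euc (d+1)) 1 => zF d r (y : Euc (d+1))) :=
  zF_cont.curry_right

lemma zF_mem_sphere (r : Set.Icc (0:ℝ) 1) (y : Metric.sphere (0 : Euc (d+1)) 1) :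
    zF d r (y : Euc (d+1)) ∈ Metric.sphere (0 : Euc (d+1)) 1 := by
  rw [mem_sphere_zero_iff_norm]
  exact zF_mem r.2.1 r.2.2 (sphere_norm y)

noncomputable def Fmap (d : ℕ) (r : Set.Icc (0:ℝ) 1) :
    C(Metric.sphere (0 : Euc (d+1)) 1, Metric.sphere (0 : Euc (d+1)) 1) :=
  ContinuousMap.mk
    (fun y => ⟨zF d r y, zF_mem_sphere r y⟩)
    (Continuous.subtype_mk (zF_cont_r r) (zF_mem_sphere r))

lemma normalize_mem (v : Euc (d+1)) (hv : v ≠ 0) :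
    ‖v‖⁻¹ • v ∈ Metric.sphere (0 : Euc (d+1)) 1 := by
  rw [mem_sphere_zero_iff_norm, norm_smul, norm_inv, norm_norm]
  exact inv_mul_cancel₀ (norm_ne_zero_iff.mpr hv)

lemma homotopic (d : ℕ) (r : Set.Icc (0:ℝ) 1) :
    (Fmap d r).Homotopic (ContinuousMap.id _) := by
  set g : unitInterval × Metric.sphere (0 : Euc (d+1)) 1 → Euc (d+1) :=
    fun p => (1 - (p.1 : ℝ)) • zF d r p.2 + (p.1 : ℝ) • (p.2 : Euc (d+1)) with hg
  have hzc : Continuous (fun p : unitInterval × Metric.sphere (0 : Euc (d+1)) 1 =>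
      zF d r (p.2 : Euc (d+1))) :=
    (zF_cont_r r).comp continuous_snd
  have hic : Continuous (fun p : unitInterval × Metric.sphere (0 : Euc (d+1)) 1 =>
      (p.1 : ℝ)) := continuous_subtype_val.comp continuous_fst
  have hgc : Continuous g :=
    ((continuous_const.sub hic).smul hzc).add
      (hic.smul (continuous_subtype_val.comp continuous_snd))
  have hgne : ∀ p, g p ≠ 0 := fun p =>
    g_ne_zero r.2.1 r.2.2 (sphere_norm p.2) p.1.2.1 p.1.2.2
  refine ⟨⟨⟨fun p => ⟨‖g p‖⁻¹ • g p, normalize_mem _ (hgne p)⟩, ?_⟩, ?_, ?_⟩⟩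
  · exact Continuous.subtype_mk
      ((hgc.norm.inv₀ (fun p => norm_ne_zero_iff.mpr (hgne p))).smul hgc) _
  · intro y
    apply Subtype.ext
    show ‖g (0, y)‖⁻¹ • g (0, y) = (Fmap d r y : Euc (d+1))
    have hgy : g (0, y) = zF d r y := by simp [hg]
    rw [hgy, zF_mem r.2.1 r.2.2 (sphere_norm y)]
    norm_num
    rfl
  · intro y
    apply Subtype.ext
    show ‖g (1, y)‖⁻¹ • g (1, y) = (y : Euc (d+1))
    have hgy : g (1, y) = (y : Euc (d+1)) := by simp [hg]
    rw [hgy, sphere_norm y]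
    norm_num

end HPF


/-- writing points of `S^{j−1} ⊆ ℝ^{j−1} × ℝ` as `(x, s)` with height
`s` (here `j − 1 = d`, the height being the last coordinate), there is a family
`(f_r)_{r ∈ [0,1]}` of well-defined continuous self-maps of the sphere with
`f_r(x, s) = (u·x, min(1, −1 + 2(s+1)/(r+1)))` for some `u = u_r(x,s) ≥ 0` making the
image lie on the sphere; each `f_r` has degree `1` (i.e. is homotopic to the identity),
maps every point of height `s ≥ r` to the north pole, and `(r, y) ↦ f_r(y)` is jointly
continuous. -/
theorem height_pushing_family {d : ℕ} :
    ∃ F : Set.Icc (0 : ℝ) 1 →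
        C(Metric.sphere (0 : Euc (d + 1)) 1, Metric.sphere (0 : Euc (d + 1)) 1),
      (∀ (r : Set.Icc (0 : ℝ) 1) (y : Metric.sphere (0 : Euc (d + 1)) 1),
        (F r y : Euc (d + 1)) (Fin.last d)
            = min 1 (-1 + 2 * ((y : Euc (d + 1)) (Fin.last d) + 1) / ((r : ℝ) + 1)) ∧
        ∃ u : ℝ, 0 ≤ u ∧ ∀ i : Fin d,
          (F r y : Euc (d + 1)) i.castSucc = u * (y : Euc (d + 1)) i.castSucc) ∧
      (∀ r : Set.Icc (0 : ℝ) 1, (F r).Homotopic (ContinuousMap.id _)) ∧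
      (∀ (r : Set.Icc (0 : ℝ) 1) (y : Metric.sphere (0 : Euc (d + 1)) 1),
        (r : ℝ) ≤ (y : Euc (d + 1)) (Fin.last d) →
          (F r y : Euc (d + 1)) = EuclideanSpace.single (Fin.last d) (1 : ℝ)) ∧
      Continuous (fun p : Set.Icc (0 : ℝ) 1 × Metric.sphere (0 : Euc (d + 1)) 1 =>
        F p.1 p.2) := by 
  refine ⟨HPF.Fmap d, ?_, HPF.homotopic d, ?_, ?_⟩
  · intro r y
    constructor
    · show HPF.zF d r (y : Euc (d+1)) (Fin.last d) = _
      rw [HPF.zF_last]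
      rfl
    · exact ⟨HPF.uF r ((y : Euc (d+1)) (Fin.last d)), HPF.uF_nonneg r.2.1,
        fun i => HPF.zF_castSucc i⟩
  · intro r y h
    show HPF.zF d r (y : Euc (d+1)) = _
    exact HPF.zF_north r.2.1 h (HPF.coord_bounds _ (HPF.sphere_norm y) _).2
  · exact Continuous.subtype_mk HPF.zF_cont (fun p => HPF.zF_mem_sphere p.1 p.2)
end
end
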